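/- Upper bound direction: for any bipartite density operator ρ_AB there exists a state σ ∈ IQ with ρ_AB ≤ (1 + C^{A|B}_{l1}(ρ_AB)) σ; explicitly, σ ∝ Σ_i |i⟩⟨i|_A ⊗ ρ^B_{ii} + Σ_{i<j} (|i⟩⟨i|_A ⊗ |ρ^B_{ji}| + |j⟩⟨j|_A ⊗ |ρ^B_{ij}|) works, using that for i ≠ j, |i⟩⟨i| ⊗ |ρ^B_{ji}| + |j⟩⟨j| ⊗ |ρ^B_{ij}| − |i⟩⟨j| ⊗ ρ^B_{ij} − |j⟩⟨i| ⊗ ρ^B_{ji} ≥ 0. -/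

import Mathlib

open scoped BigOperators ComplexOrder Kronecker

/-- Trace norm: `‖P‖_tr = Tr √(Pᴴ P)`. -/
noncomputable def traceNorm {n : Type*} [Fintype n] [DecidableEq n] (P : Matrix n n ℂ) : ℝ :=
  (((Matrix.posSemidef_conjTranspose_mul_self P).1.eigenvectorUnitary.1 *
      Matrix.diagonal (((↑) : ℝ → ℂ) ∘ ((Matrix.posSemidef_conjTranspose_mul_self P).1.eigenvalues · |>.sqrt)) *
      (star (Matrix.posSemidef_conjTranspose_mul_self P).1.eigenvectorUnitary : Matrix n n ℂ)).trace).re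

/-- The B-blocks of an operator on H_A ⊗ H_B. -/
def blockB {A B : Type*} (Q : Matrix (A × B) (A × B) ℂ) (i j : A) : Matrix B B ℂ :=
  fun b b' => Q (i, b) (j, b')

/-- l1 norm of IQ coherence: C^{A|B}_{l1}(ρ) = Σ_{i≠j} ‖ρ^B_{ij}‖_tr. -/
noncomputable def CIQl1 {A B : Type*} [Fintype A] [Fintype B] [DecidableEq A] [DecidableEq B]
    (ρ : Matrix (A × B) (A × B) ℂ) : ℝ :=
  ∑ i, ∑ j, if i = j then 0 else traceNorm (blockB ρ i j)

/-- The set of incoherent-quantum (IQ) states: convex combinations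
Σ_k p_k σ^A_k ⊗ τ^B_k with each σ^A_k an incoherent (diagonal) state on A and
each τ^B_k a state on B. -/
def IQstates (A B : Type*) [Fintype A] [Fintype B] [DecidableEq A] [DecidableEq B] :
    Set (Matrix (A × B) (A × B) ℂ) :=
  { σ | ∃ (k : ℕ) (w : Fin k → ℝ) (sA : Fin k → Matrix A A ℂ) (tB : Fin k → Matrix B B ℂ),
      (∀ m, 0 ≤ w m) ∧ (∑ m, w m = 1) ∧
      (∀ m, (sA m).PosSemidef ∧ (sA m).trace = 1 ∧ ∀ i j, i ≠ j → sA m i j = 0) ∧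
      (∀ m, (tB m).PosSemidef ∧ (tB m).trace = 1) ∧
      σ = ∑ m, (w m : ℂ) • (sA m ⊗ₖ tB m) }

/-- Max-relative entropy of IQ coherence:
C^{A|B}_max(ρ) = log₂ min {λ : ρ ≤ λσ for some σ ∈ IQ}. -/
noncomputable def CmaxIQ {A B : Type*} [Fintype A] [Fintype B] [DecidableEq A] [DecidableEq B]
    (ρ : Matrix (A × B) (A × B) ℂ) : ℝ :=
  Real.logb 2 (sInf {l : ℝ | ∃ σ ∈ IQstates A B, ((l : ℂ) • σ - ρ).PosSemidef})

section IQAuxSection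
set_option linter.unusedSectionVars false
set_option maxHeartbeats 1600000

namespace IQAux
open Matrix

variable {n : Type*} [Fintype n] [DecidableEq n]

/-- absolute value of a matrix -/
noncomputable def mAbs (P : Matrix n n ℂ) : Matrix n n ℂ :=
  ((Matrix.posSemidef_conjTranspose_mul_self P).1.eigenvectorUnitary.1 *
      Matrix.diagonal (((↑) : ℝ → ℂ) ∘ ((Matrix.posSemidef_conjTranspose_mul_self P).1.eigenvalues · |>.sqrt)) *
      (star (Matrix.posSemidef_conjTranspose_mul_self P).1.eigenvectorUnitary : Matrix n n ℂ))

lemma mAbs_posSemidef (P : Matrix n n ℂ) : (mAbs P).PosSemidef := by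
  have h := (Matrix.posSemidef_diagonal_iff (d := (((↑) : ℝ → ℂ) ∘
    ((Matrix.posSemidef_conjTranspose_mul_self P).1.eigenvalues · |>.sqrt)))).mpr
    (fun i => by simp [Real.sqrt_nonneg])
  have := h.mul_mul_conjTranspose_same
    ((Matrix.posSemidef_conjTranspose_mul_self P).1.eigenvectorUnitary.1)
  unfold mAbs
  rw [Matrix.star_eq_conjTranspose]
  exact this

lemma mAbs_mul_self (P : Matrix n n ℂ) : mAbs P * mAbs P = Pᴴ * P := by
  have hH := Matrix.posSemidef_conjTranspose_mul_self P
  have hU : star (hH.1.eigenvectorUnitary : Matrix n n ℂ) * (hH.1.eigenvectorUnitary : Matrix n n ℂ) = 1 :=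
    Matrix.mem_unitaryGroup_iff'.mp (hH.1.eigenvectorUnitary).2
  conv_rhs => rw [hH.1.spectral_theorem, Unitary.conjStarAlgAut_apply]
  unfold mAbs
  simp only [Matrix.mul_assoc]
  rw [← Matrix.mul_assoc (star _) _, hU, Matrix.one_mul, ← Matrix.mul_assoc (Matrix.diagonal _),
    Matrix.diagonal_mul_diagonal]
  congr 3
  funext i
  simp [Function.comp_apply, ← Complex.ofReal_mul, Real.mul_self_sqrt (hH.eigenvalues_nonneg i)]

lemma traceNorm_eq (P : Matrix n n ℂ) : traceNorm P = (mAbs P).trace.re := rfl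

lemma psd_sum {ι : Type*} (s : Finset ι) (f : ι → Matrix n n ℂ)
    (h : ∀ i ∈ s, (f i).PosSemidef) : (∑ i ∈ s, f i).PosSemidef :=
  Finset.sum_induction f _ (fun _ _ ha hb => ha.add hb) Matrix.PosSemidef.zero h

lemma psd_smul {P : Matrix n n ℂ} (hP : P.PosSemidef) {c : ℝ} (hc : 0 ≤ c) :
    ((c : ℂ) • P).PosSemidef := by
  refine Matrix.posSemidef_iff_dotProduct_mulVec.mpr ⟨?_, fun x => ?_⟩
  · show ((c:ℂ) • P)ᴴ = _
    rw [Matrix.conjTranspose_smul, hP.1]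
    congr 1
    simp [Complex.conj_ofReal]
  · rw [Matrix.smul_mulVec, dotProduct_smul, smul_eq_mul]
    exact mul_nonneg (by positivity) (hP.dotProduct_mulVec_nonneg x)

lemma psd_diag_nonneg {P : Matrix n n ℂ} (hP : P.PosSemidef) (i : n) :
    0 ≤ P i i :=
  hP.diag_nonneg

lemma psd_trace_nonneg {P : Matrix n n ℂ} (hP : P.PosSemidef) : 0 ≤ P.trace :=
  Finset.sum_nonneg fun i _ => psd_diag_nonneg hP i

lemma psd_trace_re_nonneg {P : Matrix n n ℂ} (hP : P.PosSemidef) : 0 ≤ P.trace.re := by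
  have := psd_trace_nonneg hP
  rw [Complex.le_def] at this
  simpa using this.1

lemma psd_trace_eq_re {P : Matrix n n ℂ} (hP : P.PosSemidef) : P.trace = (P.trace.re : ℂ) := by
  have := psd_trace_nonneg hP
  rw [Complex.le_def] at this
  apply Complex.ext <;> simp [this.2.symm]

lemma traceNorm_nonneg (P : Matrix n n ℂ) : 0 ≤ traceNorm P :=
  psd_trace_re_nonneg (mAbs_posSemidef P)

lemma psd_trace_zero {P : Matrix n n ℂ} (hP : P.PosSemidef)
    (h : P.trace = 0) : P = 0 :=
  hP.trace_eq_zero_iff.mp h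

open scoped MatrixOrder in
/-- For Hermitian `H` and PSD `N` with `N² = H²`, we have `N - H ⪰ 0`. -/
lemma sub_psd_of_sq_eq_sq {H N : Matrix n n ℂ}
    (hH : H.IsHermitian) (hN : N.PosSemidef) (h2 : N * N = H * H) :
    (N - H).PosSemidef := by
  have hU : (star (hH.eigenvectorUnitary : Matrix n n ℂ)) * (hH.eigenvectorUnitary : Matrix n n ℂ) = 1 :=
    Matrix.mem_unitaryGroup_iff'.mp (hH.eigenvectorUnitary).2
  set U : Matrix n n ℂ := (hH.eigenvectorUnitary : Matrix n n ℂ) with hUdef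
  have key : ∀ d e : n → ℂ, (U * Matrix.diagonal d * star U) * (U * Matrix.diagonal e * star U)
      = U * Matrix.diagonal (fun i => d i * e i) * star U := by
    intro d e
    simp only [Matrix.mul_assoc]
    rw [← Matrix.mul_assoc (star U) U, hU, Matrix.one_mul,
      ← Matrix.mul_assoc (Matrix.diagonal d), Matrix.diagonal_mul_diagonal]
  have hspec := hH.spectral_theorem
  rw [Unitary.conjStarAlgAut_apply, ← hUdef] at hspec
  set ev := hH.eigenvalues with hev
  set P : Matrix n n ℂ := U * Matrix.diagonal (RCLike.ofReal ∘ fun i => |ev i|) * star U with hP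
  have hPpsd : P.PosSemidef := by
    rw [hP, Matrix.star_eq_conjTranspose]
    refine Matrix.PosSemidef.mul_mul_conjTranspose_same ?_ U
    refine Matrix.posSemidef_diagonal_iff.mpr fun i => ?_
    rw [RCLike.nonneg_iff]
    simp [abs_nonneg]
  have hfun : (fun i => ((RCLike.ofReal ∘ fun i => |ev i|) i : ℂ) * (RCLike.ofReal ∘ fun i => |ev i|) i)
      = (fun i => ((RCLike.ofReal ∘ ev) i : ℂ) * (RCLike.ofReal ∘ ev) i) := by
    funext i
    simp only [Function.comp_apply, ← RCLike.ofReal_mul, abs_mul_abs_self]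
  have hPsq : P * P = H * H := by
    rw [hP, key, hspec, key, hfun]
  have hNP : N = P := (CFC.sq_eq_sq_iff N P hN.nonneg hPpsd.nonneg).mp (by rw [pow_two, pow_two, h2, hPsq])
  have hsub : N - H = U * Matrix.diagonal (RCLike.ofReal ∘ fun i => |ev i| - ev i) * star U := by
    rw [hNP, hP]
    conv_lhs => rw [hspec]
    rw [← Matrix.sub_mul, ← Matrix.mul_sub]
    congr 2
    rw [Matrix.diagonal_sub]
    ext i j
    rcases eq_or_ne i j with rfl | hij
    · simp only [Matrix.diagonal_apply_eq, Function.comp_apply]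
      push_cast
      ring
    · rw [Matrix.diagonal_apply_ne _ hij, Matrix.diagonal_apply_ne _ hij]
  rw [hsub, Matrix.star_eq_conjTranspose]
  refine Matrix.PosSemidef.mul_mul_conjTranspose_same ?_ U
  refine Matrix.posSemidef_diagonal_iff.mpr fun i => ?_
  rw [RCLike.nonneg_iff]
  simp [sub_nonneg, le_abs_self]

variable {A B : Type*} [Fintype A] [Fintype B] [DecidableEq A] [DecidableEq B]

lemma kron_conjTranspose {m p : Type*} (M : Matrix m m ℂ) (N : Matrix p p ℂ) :
    (M ⊗ₖ N)ᴴ = Mᴴ ⊗ₖ Nᴴ := by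
  ext ⟨a, b⟩ ⟨c, d⟩
  simp [Matrix.conjTranspose_apply, Matrix.kroneckerMap_apply, star_mul', mul_comm]

lemma stdBasis_conjT (i j : A) : (Matrix.single i j (1 : ℂ))ᴴ = Matrix.single j i 1 := by
  ext a b
  simp [Matrix.conjTranspose_apply, Matrix.single, apply_ite (star : ℂ → ℂ), and_comm]

/-- `EM i j X = |i⟩⟨j| ⊗ X` -/
def EM (i j : A) (X : Matrix B B ℂ) : Matrix (A × B) (A × B) ℂ :=
  Matrix.single i j (1 : ℂ) ⊗ₖ X

lemma EM_conjT (i j : A) (X : Matrix B B ℂ) : (EM i j X)ᴴ = EM j i Xᴴ := by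
  rw [EM, kron_conjTranspose, stdBasis_conjT, EM]

lemma EM_mul_same (i j k : A) (X Y : Matrix B B ℂ) :
    EM i j X * EM j k Y = EM i k (X * Y) := by
  rw [EM, EM, ← Matrix.mul_kronecker_mul, Matrix.single_mul_single_same, mul_one, EM]

lemma EM_mul_ne {j k : A} (h : j ≠ k) (i l : A) (X Y : Matrix B B ℂ) :
    EM i j X * EM k l Y = 0 := by
  rw [EM, EM, ← Matrix.mul_kronecker_mul, Matrix.single_mul_single_of_ne (h := h),
    Matrix.zero_kronecker]

lemma EM_add (i j : A) (X Y : Matrix B B ℂ) : EM i j (X + Y) = EM i j X + EM i j Y :=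
  Matrix.kronecker_add _ _ _

lemma EM_zero (i j : A) : EM i j (0 : Matrix B B ℂ) = 0 := Matrix.kronecker_zero _

lemma EM_smul (i j : A) (c : ℂ) (X : Matrix B B ℂ) : EM i j (c • X) = c • EM i j X :=
  Matrix.kronecker_smul _ _ _

lemma EM_sum {ι : Type*} (i j : A) (s : Finset ι) (f : ι → Matrix B B ℂ) :
    EM i j (∑ x ∈ s, f x) = ∑ x ∈ s, EM i j (f x) := by
  ext ⟨a, b⟩ ⟨c, d⟩
  simp [EM, Matrix.kroneckerMap_apply, Matrix.sum_apply, Finset.mul_sum]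

lemma EM_trace (i : A) (X : Matrix B B ℂ) : (EM i i X).trace = X.trace := by
  have h1 : (Matrix.single i i (1 : ℂ)).trace = 1 := by
    rw [Matrix.trace, Matrix.diag_single_same]
    simp
  rw [EM, Matrix.trace_kronecker, h1, one_mul]

lemma EM_psd (i : A) {X : Matrix B B ℂ} (hX : X.PosSemidef) : (EM i i X).PosSemidef := by
  rw [EM]
  refine Matrix.PosSemidef.kronecker ?_ hX
  simpa using Matrix.posSemidef_conjTranspose_mul_self (Matrix.single i i (1 : ℂ))

lemma blockB_conjT {ρ : Matrix (A × B) (A × B) ℂ} (h : ρ.IsHermitian) (i j : A) :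
    (blockB ρ i j)ᴴ = blockB ρ j i := by
  ext b b'
  have := congrFun (congrFun h (j, b)) (i, b')
  simpa [Matrix.conjTranspose_apply, blockB] using this

lemma blockB_posSemidef {ρ : Matrix (A × B) (A × B) ℂ} (hρ : ρ.PosSemidef) (i : A) :
    (blockB ρ i i).PosSemidef := by
  refine Matrix.posSemidef_iff_dotProduct_mulVec.mpr ⟨?_, ?_⟩
  · ext b b'
    have := congrFun (congrFun hρ.1 (i, b)) (i, b')
    simpa [Matrix.conjTranspose_apply, blockB] using this
  · intro x
    have h := hρ.dotProduct_mulVec_nonneg (fun p => if p.1 = i then x p.2 else 0)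
    have key : star (fun p : A × B => if p.1 = i then x p.2 else 0) ⬝ᵥ
        (ρ *ᵥ fun p : A × B => if p.1 = i then x p.2 else 0)
        = star x ⬝ᵥ (blockB ρ i i *ᵥ x) := by
      simp only [dotProduct, Matrix.mulVec, Fintype.sum_prod_type, Pi.star_apply,
        apply_ite (star : ℂ → ℂ), star_zero, blockB, mul_ite, mul_zero, ite_mul, zero_mul]
      simp [Finset.sum_ite_eq', Finset.mul_sum]
    rw [key] at h
    exact h

/-- sum over the erased set written as an `ite`-sum -/
lemma sum_erase_eq_sum_ite {M : Type*} [AddCommMonoid M] (i : A) (g : A → M) :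
    ∑ j ∈ Finset.univ.erase i, g j = ∑ j, if i = j then 0 else g j := by
  rw [← Finset.filter_ne', Finset.sum_filter]
  refine Finset.sum_congr rfl fun j _ => ?_
  rcases eq_or_ne j i with rfl | h
  · simp
  · simp [h, (Ne.symm h)]

lemma sum_sum_erase_swap {M : Type*} [AddCommMonoid M] (f : A → A → M) :
    ∑ i, ∑ j ∈ Finset.univ.erase i, f i j = ∑ i, ∑ j ∈ Finset.univ.erase i, f j i := by
  simp only [sum_erase_eq_sum_ite]
  rw [Finset.sum_comm]
  refine Finset.sum_congr rfl fun i _ => Finset.sum_congr rfl fun j _ => ?_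
  rcases eq_or_ne i j with rfl | h
  · simp
  · simp [h, (Ne.symm h)]

lemma sum_EM_blockB (ρ : Matrix (A × B) (A × B) ℂ) :
    ∑ i, ∑ j, EM i j (blockB ρ i j) = ρ := by
  ext ⟨a, b⟩ ⟨c, d⟩
  simp only [Matrix.sum_apply, EM, Matrix.kroneckerMap_apply, blockB,
    Matrix.single, Matrix.of_apply, ite_mul, one_mul, zero_mul, ite_and]
  rw [Finset.sum_eq_single a]
  · simp only [if_pos rfl]
    rw [Finset.sum_eq_single c]
    · simp
    · intro y _ hy
      simp [hy]
    · simp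
  · intro x _ hx
    simp [hx]
  · simp

end IQAux

end IQAuxSection

open Matrix in
set_option maxHeartbeats 1600000 in
/-- upper bound direction: there exists an IQ state σ with
ρ_AB ≤ (1 + C^{A|B}_{l1}(ρ_AB)) σ. -/
theorem exists_IQ_upper_bound {A B : Type*} [Fintype A] [Fintype B] [DecidableEq A]
    [DecidableEq B] (ρ : Matrix (A × B) (A × B) ℂ) (hρ : ρ.PosSemidef) (hTr : ρ.trace = 1) :
    ∃ σ ∈ IQstates A B, ((((1 + CIQl1 ρ : ℝ) : ℂ)) • σ - ρ).PosSemidef := by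
  classical
  have hABne : Nonempty (A × B) := by
    by_contra h
    rw [not_nonempty_iff] at h
    rw [Matrix.trace, Finset.univ_eq_empty, Finset.sum_empty] at hTr
    exact one_ne_zero hTr.symm
  have hBne : Nonempty B := ⟨hABne.some.2⟩
  obtain ⟨b₀⟩ := hBne
  set lam : ℝ := 1 + CIQl1 ρ with hlam
  have hC0 : 0 ≤ CIQl1 ρ := by
    refine Finset.sum_nonneg fun i _ => Finset.sum_nonneg fun j _ => ?_
    split_ifs
    · exact le_rfl
    · exact IQAux.traceNorm_nonneg _
  have hlam0 : 0 < lam := by rw [hlam]; linarith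
  have hlamC : (lam : ℂ) ≠ 0 := Complex.ofReal_ne_zero.mpr hlam0.ne'
  set Bk : A → Matrix B B ℂ := fun i =>
    blockB ρ i i + ∑ j ∈ Finset.univ.erase i, IQAux.mAbs (blockB ρ j i) with hBk
  set Mm : Matrix (A × B) (A × B) ℂ := ∑ i, IQAux.EM i i (Bk i) with hMm
  have hBkpsd : ∀ i, (Bk i).PosSemidef := fun i =>
    (IQAux.blockB_posSemidef hρ i).add
      (IQAux.psd_sum _ _ fun j _ => IQAux.mAbs_posSemidef _)
  -- pairwise positivity
  have hpair : ∀ i j : A, i ≠ j →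
      ((IQAux.EM i i (IQAux.mAbs (blockB ρ j i)) + IQAux.EM j j (IQAux.mAbs (blockB ρ i j))) -
        (IQAux.EM i j (blockB ρ i j) + IQAux.EM j i (blockB ρ j i))).PosSemidef := by
    intro i j hij
    have hji : blockB ρ j i = (blockB ρ i j)ᴴ := (IQAux.blockB_conjT hρ.1 i j).symm
    rw [hji]
    refine IQAux.sub_psd_of_sq_eq_sq ?_ ?_ ?_
    · show _ᴴ = _
      rw [Matrix.conjTranspose_add, IQAux.EM_conjT, IQAux.EM_conjT,
        Matrix.conjTranspose_conjTranspose, add_comm]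
    · exact (IQAux.EM_psd i (IQAux.mAbs_posSemidef _)).add
        (IQAux.EM_psd j (IQAux.mAbs_posSemidef _))
    · simp only [Matrix.add_mul, Matrix.mul_add, IQAux.EM_mul_same,
        IQAux.EM_mul_ne hij, IQAux.EM_mul_ne (Ne.symm hij)]
      rw [IQAux.mAbs_mul_self, IQAux.mAbs_mul_self, Matrix.conjTranspose_conjTranspose]
      abel
  have hsplitM : Mm = (∑ i, IQAux.EM i i (blockB ρ i i)) +
      ∑ i, ∑ j ∈ Finset.univ.erase i, IQAux.EM i i (IQAux.mAbs (blockB ρ j i)) := by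
    rw [hMm, ← Finset.sum_add_distrib]
    refine Finset.sum_congr rfl fun i _ => ?_
    rw [hBk]
    exact (IQAux.EM_add _ _ _ _).trans (by rw [IQAux.EM_sum])
  have hsplitρ : ρ = (∑ i, IQAux.EM i i (blockB ρ i i)) +
      ∑ i, ∑ j ∈ Finset.univ.erase i, IQAux.EM i j (blockB ρ i j) := by
    conv_lhs => rw [← IQAux.sum_EM_blockB ρ]
    rw [← Finset.sum_add_distrib]
    exact Finset.sum_congr rfl fun i _ => (Finset.add_sum_erase _ _ (Finset.mem_univ i)).symm
  have hT : (∑ i, ∑ j ∈ Finset.univ.erase i,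
      ((IQAux.EM i i (IQAux.mAbs (blockB ρ j i)) + IQAux.EM j j (IQAux.mAbs (blockB ρ i j))) -
        (IQAux.EM i j (blockB ρ i j) + IQAux.EM j i (blockB ρ j i)))).PosSemidef :=
    IQAux.psd_sum _ _ fun i _ => IQAux.psd_sum _ _ fun j hj =>
      hpair i j (Ne.symm (Finset.ne_of_mem_erase hj))
  have hTeq : (∑ i, ∑ j ∈ Finset.univ.erase i,
      ((IQAux.EM i i (IQAux.mAbs (blockB ρ j i)) + IQAux.EM j j (IQAux.mAbs (blockB ρ i j))) -
        (IQAux.EM i j (blockB ρ i j) + IQAux.EM j i (blockB ρ j i))))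
      = (2 : ℂ) • (Mm - ρ) := by
    have e1 := IQAux.sum_sum_erase_swap (A := A)
      (fun i j => IQAux.EM j j (IQAux.mAbs (blockB ρ i j)))
    have e2 := IQAux.sum_sum_erase_swap (A := A)
      (fun i j => IQAux.EM j i (blockB ρ j i))
    have hsplitM' : ∑ i : A, ∑ j ∈ Finset.univ.erase i, IQAux.EM i i (IQAux.mAbs (blockB ρ j i))
        = Mm - ∑ i : A, IQAux.EM i i (blockB ρ i i) := by
      rw [eq_sub_iff_add_eq, add_comm]
      exact hsplitM.symm
    have hsplitρ' : ∑ i : A, ∑ j ∈ Finset.univ.erase i, IQAux.EM i j (blockB ρ i j)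
        = ρ - ∑ i : A, IQAux.EM i i (blockB ρ i i) := by
      rw [eq_sub_iff_add_eq, add_comm]
      exact hsplitρ.symm
    simp only [Finset.sum_sub_distrib, Finset.sum_add_distrib]
    rw [e1, e2, hsplitM', hsplitρ', two_smul]
    abel
  have hMρ : (Mm - ρ).PosSemidef := by
    have h2 : Mm - ρ = (((2:ℝ)⁻¹ : ℝ) : ℂ) • ((2:ℂ) • (Mm - ρ)) := by
      rw [smul_smul]
      norm_num
    rw [h2, ← hTeq]
    exact IQAux.psd_smul hT (by norm_num)
  -- traces
  have htrM : Mm.trace = ∑ i, (Bk i).trace := by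
    rw [hMm, Matrix.trace_sum]
    exact Finset.sum_congr rfl fun i _ => IQAux.EM_trace i _
  have htrdiag : ∑ i, (blockB ρ i i).trace = 1 := by
    rw [← hTr]
    simp [Matrix.trace, Matrix.diag, blockB, Fintype.sum_prod_type]
  have hCsum : ∑ i, ∑ j ∈ Finset.univ.erase i, traceNorm (blockB ρ j i) = CIQl1 ρ := by
    rw [IQAux.sum_sum_erase_swap (fun i j => traceNorm (blockB ρ j i))]
    rw [CIQl1]
    exact Finset.sum_congr rfl fun i _ => by rw [IQAux.sum_erase_eq_sum_ite]
  have htrMlam : Mm.trace = (lam : ℂ) := by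
    have hstep : ∀ i : A, (Bk i).trace = (blockB ρ i i).trace +
        ((∑ j ∈ Finset.univ.erase i, traceNorm (blockB ρ j i) : ℝ) : ℂ) := by
      intro i
      rw [hBk]
      rw [Matrix.trace_add, Matrix.trace_sum]
      congr 1
      rw [Complex.ofReal_sum]
      exact Finset.sum_congr rfl fun j _ =>
        IQAux.psd_trace_eq_re (IQAux.mAbs_posSemidef _)
    rw [htrM]
    calc ∑ i, (Bk i).trace
        = ∑ i, ((blockB ρ i i).trace +
            ((∑ j ∈ Finset.univ.erase i, traceNorm (blockB ρ j i) : ℝ) : ℂ)) :=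
          Finset.sum_congr rfl fun i _ => hstep i
      _ = (lam : ℂ) := by
          rw [Finset.sum_add_distrib, htrdiag, ← Complex.ofReal_sum, hCsum, hlam]
          push_cast
          ring
  set k := Fintype.card A with hk
  set e : Fin k ≃ A := (Fintype.equivFin A).symm with he
  refine ⟨(lam : ℂ)⁻¹ • Mm,
    ⟨k, fun m => (Bk (e m)).trace.re / lam,
      fun m => Matrix.single (e m) (e m) 1,
      fun m => if h : (Bk (e m)).trace = 0 then Matrix.diagonal (Pi.single b₀ 1)
        else ((Bk (e m)).trace)⁻¹ • Bk (e m),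
      ?_, ?_, ?_, ?_, ?_⟩, ?_⟩
  · intro m
    exact div_nonneg (IQAux.psd_trace_re_nonneg (hBkpsd _)) hlam0.le
  · have hsum : ∑ m, (Bk (e m)).trace.re = lam := by
      rw [Equiv.sum_comp e (fun i => (Bk i).trace.re), ← Complex.re_sum, ← htrM, htrMlam,
        Complex.ofReal_re]
    rw [← Finset.sum_div, hsum, div_self hlam0.ne']
  · intro m
    dsimp only
    have hD : Matrix.single (e m) (e m) (1:ℂ) = Matrix.diagonal (Pi.single (e m) 1) := by
      ext a b
      rcases eq_or_ne a b with rfl | hab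
      · rcases eq_or_ne (e m) a with rfl | h
        · simp [Matrix.single]
        · simp [Matrix.single, h, Pi.single_eq_of_ne (Ne.symm h)]
      · rcases eq_or_ne (e m) a with rfl | h
        · simp [Matrix.single, Matrix.diagonal_apply_ne _ hab, hab]
        · simp [Matrix.single, Matrix.diagonal_apply_ne _ hab, h]
    refine ⟨?_, ?_, ?_⟩
    · rw [hD]
      refine Matrix.posSemidef_diagonal_iff.mpr fun a => ?_
      rcases eq_or_ne a (e m) with rfl | h
      · simp
      · simp [Pi.single_eq_of_ne h]
    · rw [hD, Matrix.trace_diagonal]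
      simp
    · intro a b hab
      rw [hD, Matrix.diagonal_apply_ne _ hab]
  · intro m
    dsimp only
    by_cases h : (Bk (e m)).trace = 0
    · rw [dif_pos h]
      constructor
      · refine Matrix.posSemidef_diagonal_iff.mpr fun a => ?_
        rcases eq_or_ne a b₀ with rfl | hb
        · simp
        · simp [Pi.single_eq_of_ne hb]
      · rw [Matrix.trace_diagonal]
        simp
    · rw [dif_neg h]
      constructor
      · have hre := IQAux.psd_trace_eq_re (hBkpsd (e m))
        rw [hre, ← Complex.ofReal_inv]
        exact IQAux.psd_smul (hBkpsd _)
          (inv_nonneg.mpr (IQAux.psd_trace_re_nonneg (hBkpsd _)))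
      · rw [Matrix.trace_smul, smul_eq_mul, inv_mul_cancel₀ h]
  · -- the convex-combination identity
    rw [hMm, Finset.smul_sum,
      ← Equiv.sum_comp e (fun i => (lam : ℂ)⁻¹ • IQAux.EM i i (Bk i))]
    refine Finset.sum_congr rfl fun m _ => ?_
    dsimp only
    by_cases h : (Bk (e m)).trace = 0
    · have hzero : Bk (e m) = 0 := IQAux.psd_trace_zero (hBkpsd _) h
      rw [dif_pos h, hzero, IQAux.EM_zero, smul_zero]
      simp
    · rw [dif_neg h]
      have hre := IQAux.psd_trace_eq_re (hBkpsd (e m))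
      have hre0 : ((Bk (e m)).trace.re : ℂ) ≠ 0 := by
        rw [← hre]; exact h
      rw [Matrix.kronecker_smul, smul_smul]
      congr 1
      rw [Complex.ofReal_div, ← hre, div_mul_eq_mul_div, mul_inv_cancel₀ h, one_div]
  · rw [smul_smul, mul_inv_cancel₀ hlamC, one_smul]
    exact hMρ
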